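/- The lattice with Gram matrix [[6,2,1],[2,-2,2],[1,2,-2]] is isometric to U ⊕ ⟨-18⟩. -/

import Mathlib

/-- Two integral Gram matrices define isometric lattices iff they are congruent
by a matrix in `GL(n, ℤ)`. -/
def GramIsometric {n : ℕ} (G₁ G₂ : Matrix (Fin n) (Fin n) ℤ) : Prop :=
  ∃ P : Matrix (Fin n) (Fin n) ℤ, IsUnit P.det ∧ P.transpose * G₁ * P = G₂

/-- the lattice [[6,2,1],[2,-2,2],[1,2,-2]] is isometric to U ⊕ ⟨-18⟩. -/
theorem stmt7 :
    GramIsometric !![6, 2, 1; 2, -2, 2; 1, 2, -2]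
      !![0, 1, 0; 1, 0, 0; 0, 0, -18] := by
  refine ⟨!![-1, -1, -6; 1, 1, 7; 0, 1, 4], ?_, ?_⟩
  · rw [show (!![-1, -1, -6; 1, 1, 7; 0, 1, 4] : Matrix (Fin 3) (Fin 3) ℤ).det = 1 by
      rw [Matrix.det_fin_three]; decide]
    exact isUnit_one
  · simp [Matrix.mul_fin_three, Matrix.transpose]
    decide
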